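/- With G_m^d defined by the recursion (G_1^d of size d+1; |G_m^d| = 2|G_{m/2}^{d-1}| for m even; |G_m^d| = |G_{(m-1)/2}^{d-1}| + |G_{(m+1)/2}^{d-1}| for m odd), the size satisfies the closed form |G_m^d| = m(d − κ) + 2^{κ+1} − m, where κ = ⌊log₂ m⌋, for all d ≥ 1 and 1 ≤ m ≤ 2^{d-1}. -/

import Mathlib

/-- Vertices of the hypercube `Q_d`. -/
abbrev Vtx (d : ℕ) := Fin d → ZMod 2

/-- The `i`-th standard basis vector of `(ZMod 2)^d`. -/
def eV {d : ℕ} (i : Fin d) : Vtx d := Pi.single i 1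

/-- The number of edges of `Q_d` in direction `i` whose two endpoints both lie
in `S`, i.e. the number of pairs `{t, t ⊕ e_i} ⊆ S`. -/
def edgeCount {d : ℕ} (S : Finset (Vtx d)) (i : Fin d) : ℕ :=
  (S.filter fun t => t i = 0 ∧ t + eV i ∈ S).card

/-- `S ⊆ Q_d` is a `(d,m)`-edge equitable design: exactly `m` edges of the
induced subgraph in each direction. -/
def Equitable {d : ℕ} (S : Finset (Vtx d)) (m : ℕ) : Prop :=
  ∀ i : Fin d, edgeCount S i = m

/-- Embedding of `Q_d` into `Q_{d+1}` fixing the last coordinate to `0`. -/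
def emb {d : ℕ} (t : Vtx d) : Vtx (d + 1) := Fin.snoc t 0

/-- Embedding of `Q_d` into `Q_{d+1}` followed by the reflection `⊕ e_1 ⊕ e_d`
(multiplication by `X_1 X_d`). -/
def embS {d : ℕ} (t : Vtx d) : Vtx (d + 1) := Fin.snoc t 0 + eV 0 + eV (Fin.last d)

/-- The recursively defined designs `G_m^d`:
`G_1^d = {0, e_1, …, e_d}`; for even `m`, `G_m^d = G_{m/2}^{d-1} ∪ (G_{m/2}^{d-1} ⊕ e_1 ⊕ e_d)`;
for odd `m`, `G_m^d = G_{(m-1)/2}^{d-1} ∪ (G_{(m+1)/2}^{d-1} ⊕ e_1 ⊕ e_d)`. -/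
def G : (d : ℕ) → ℕ → Finset (Vtx d)
  | 0, _ => ∅
  | _ + 1, 0 => ∅
  | d + 1, 1 => insert (0 : Vtx (d + 1)) (Finset.univ.image fun i : Fin (d + 1) => eV i)
  | d + 1, m + 2 =>
    if (m + 2) % 2 = 0 then
      ((G d ((m + 2) / 2)).image emb) ∪ ((G d ((m + 2) / 2)).image embS)
    else
      ((G d ((m + 2 - 1) / 2)).image emb) ∪ ((G d ((m + 2 + 1) / 2)).image embS)

lemma eV_injective {d : ℕ} : Function.Injective (eV (d := d)) := by
  intro i j h
  by_contra hne
  have h2 := congrFun h i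
  rw [eV, eV, Pi.single_eq_same, Pi.single_eq_of_ne hne] at h2
  exact one_ne_zero h2

lemma emb_injective {d : ℕ} : Function.Injective (emb (d := d)) := by
  intro a b h
  have := congrArg Fin.init h
  simpa [emb, Fin.init_snoc] using this

lemma embS_injective {d : ℕ} : Function.Injective (embS (d := d)) := by
  intro a b h
  have h1 : Fin.snoc a (0 : ZMod 2) + eV 0 = Fin.snoc b 0 + eV 0 := add_right_cancel h
  exact emb_injective (add_right_cancel h1)

lemma emb_last {d : ℕ} (t : Vtx d) : emb t (Fin.last d) = 0 := by
  simp [emb]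

lemma embS_last {d : ℕ} (hd : 1 ≤ d) (t : Vtx d) : embS t (Fin.last d) = 1 := by
  have hne : Fin.last d ≠ (0 : Fin (d + 1)) := by
    simp [Fin.ext_iff]; omega
  simp [embS, eV, Pi.single_eq_of_ne hne, Pi.single_eq_same]

lemma card_G_one (d : ℕ) : (G (d + 1) 1).card = d + 2 := by
  rw [show G (d + 1) 1 =
      insert (0 : Vtx (d + 1)) (Finset.univ.image fun i : Fin (d + 1) => eV i) from rfl]
  rw [Finset.card_insert_of_notMem, Finset.card_image_of_injective _ eV_injective]
  · simp
  · simp only [Finset.mem_image]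
    rintro ⟨i, -, hi⟩
    have := congrFun hi i
    rw [eV, Pi.single_eq_same] at this
    exact one_ne_zero this

lemma disj_emb_embS {d : ℕ} (hd : 1 ≤ d) (A B : Finset (Vtx d)) :
    Disjoint (A.image emb) (B.image embS) := by
  rw [Finset.disjoint_left]
  simp only [Finset.mem_image]
  rintro x ⟨t, -, rfl⟩ ⟨s, -, hs⟩
  have := congrFun hs (Fin.last d)
  rw [embS_last hd, emb_last] at this
  exact one_ne_zero this

lemma card_G_step (d m : ℕ) (hd : 1 ≤ d) :
    (G (d + 1) (m + 2)).card = (G d ((m + 2) / 2)).card + (G d ((m + 3) / 2)).card := by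
  by_cases h : (m + 2) % 2 = 0
  · have h3 : (m + 3) / 2 = (m + 2) / 2 := by omega
    rw [show G (d + 1) (m + 2) = ((G d ((m + 2) / 2)).image emb) ∪
        ((G d ((m + 2) / 2)).image embS) by conv_lhs => rw [G, if_pos h]
      , h3,
      Finset.card_union_of_disjoint (disj_emb_embS hd _ _),
      Finset.card_image_of_injective _ emb_injective,
      Finset.card_image_of_injective _ embS_injective]
  · have h1 : (m + 2 - 1) / 2 = (m + 2) / 2 := by omega
    have h2 : (m + 2 + 1) / 2 = (m + 3) / 2 := by omega
    rw [show G (d + 1) (m + 2) = ((G d ((m + 2 - 1) / 2)).image emb) ∪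
        ((G d ((m + 2 + 1) / 2)).image embS) by conv_lhs => rw [G, if_neg h]
      , h1, h2,
      Finset.card_union_of_disjoint (disj_emb_embS hd _ _),
      Finset.card_image_of_injective _ emb_injective,
      Finset.card_image_of_injective _ embS_injective]

lemma key : ∀ d m, 1 ≤ m → m ≤ 2 ^ d →
    ((G (d + 1) m).card : ℤ) =
      m * ((d : ℤ) + 1 - Nat.log 2 m) + 2 ^ (Nat.log 2 m + 1) - m := by
  intro d
  induction d with
  | zero =>
    intro m hm hm2
    interval_cases m
    · rw [card_G_one]; norm_num
  | succ d ih =>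
    intro m hm hm2
    match m, hm with
    | 1, _ => rw [card_G_one]; push_cast; simp only [Nat.log_one_right]; ring
    | (m + 2), _ =>
      rw [card_G_step (d + 1) m (by omega)]
      have h2d : 2 ^ (d + 1) = 2 * 2 ^ d := by ring
      obtain ⟨a, ha⟩ : ∃ a, (m + 2) / 2 = a := ⟨_, rfl⟩
      obtain ⟨b, hb⟩ : ∃ b, (m + 3) / 2 = b := ⟨_, rfl⟩
      rw [ha, hb]
      have ha1 : 1 ≤ a := by omega
      have hb1 : 1 ≤ b := by omega
      have hab : b = a ∨ b = a + 1 := by omega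
      have hb2 : b ≤ 2 ^ d := by omega
      have ha2 : a ≤ 2 ^ d := by omega
      have pa : 2 ^ Nat.log 2 a ≤ a := Nat.pow_log_le_self 2 (by omega)
      have pa2 : a < 2 ^ (Nat.log 2 a + 1) := Nat.lt_pow_succ_log_self (by norm_num) a
      have e1 : 2 ^ (Nat.log 2 a + 1) = 2 * 2 ^ Nat.log 2 a := by ring
      have e2 : 2 ^ (Nat.log 2 a + 1 + 1) = 2 * 2 ^ (Nat.log 2 a + 1) := by ring
      have hlog : Nat.log 2 (m + 2) = Nat.log 2 a + 1 :=
        Nat.log_eq_of_pow_le_of_lt_pow (by omega) (by omega)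
      rw [hlog]
      push_cast
      rw [ih a ha1 ha2, ih b hb1 hb2]
      have hmab : (m : ℤ) = (a : ℤ) + (b : ℤ) - 2 := by omega
      rw [hmab]
      rcases hab with rfl | rfl
      · push_cast; ring
      · by_cases hp : a + 1 = 2 ^ (Nat.log 2 a + 1)
        · have hlb : Nat.log 2 (a + 1) = Nat.log 2 a + 1 := by
            rw [hp, Nat.log_pow (by norm_num)]
          have hpz : (a : ℤ) + 1 = 2 ^ (Nat.log 2 a + 1) := by exact_mod_cast hp
          rw [hlb]
          push_cast
          linear_combination -hpz
        · have hlb : Nat.log 2 (a + 1) = Nat.log 2 a :=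
            Nat.log_eq_of_pow_le_of_lt_pow (by omega) (by omega)
          rw [hlb]
          push_cast
          ring

theorem stmt12 (d m : ℕ) (hd : 1 ≤ d) (hm : 1 ≤ m) (hm2 : m ≤ 2 ^ (d - 1)) :
    (G d m).card = m * (d - Nat.log 2 m) + 2 ^ (Nat.log 2 m + 1) - m := by
  obtain ⟨d', rfl⟩ : ∃ d', d = d' + 1 := ⟨d - 1, by omega⟩
  have hm2' : m ≤ 2 ^ d' := by simpa using hm2
  have hZ := key d' m hm hm2'
  have hk : Nat.log 2 m ≤ d' := by
    calc Nat.log 2 m ≤ Nat.log 2 (2 ^ d') := Nat.log_mono_right hm2'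
    _ = d' := Nat.log_pow (by norm_num) d'
  have hm3 : m ≤ 2 ^ (Nat.log 2 m + 1) := le_of_lt (Nat.lt_pow_succ_log_self (by norm_num) m)
  have hsub : m ≤ m * (d' + 1 - Nat.log 2 m) + 2 ^ (Nat.log 2 m + 1) := by omega
  zify [hsub, show Nat.log 2 m ≤ d' + 1 by omega]
  linarith [hZ]
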